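/- arXiv:2507.04148 — 4 statements merged into one kernel-verified Lean document; each statement's English description precedes it below -/
import Mathlib

section
/- Let z : ℝ → ℝ be weakly increasing, and define r(v) = C - v·z(v) - ∫_v^{v_max} z(σ) dσ for a constant C and all v ∈ [v_min, v_max]. Then for all v, v' ∈ [v_min, v_max]: r(v) + v·z(v) ≥ r(v') + v·z(v'). (Second-phase incentive compatibility.) -/
/-- Second-phase incentive compatibility follows from monotonicity of the allocation
via the continuous payment identity PI-r-cont. -/
theorem stmt1 (vmin vmax C : ℝ) (hV : vmin ≤ vmax) (z : ℝ → ℝ)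
    (hmono : MonotoneOn z (Set.Icc vmin vmax))
    (hz : ∀ v ∈ Set.Icc vmin vmax, z v ∈ Set.Icc (0:ℝ) 1)
    (hint : IntervalIntegrable z MeasureTheory.volume vmin vmax)
    (r : ℝ → ℝ)
    (hr : ∀ v ∈ Set.Icc vmin vmax, r v = C - v * z v - ∫ σ in v..vmax, z σ) :
    ∀ v ∈ Set.Icc vmin vmax, ∀ v' ∈ Set.Icc vmin vmax,
      r v' + v * z v' ≤ r v + v * z v := by
  intro v hv v' hv'
  rw [hr v hv, hr v' hv']
  obtain ⟨hv1, hv2⟩ := hv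
  obtain ⟨hv'1, hv'2⟩ := hv'
  have hsub : ∀ a b : ℝ, a ∈ Set.Icc vmin vmax → b ∈ Set.Icc vmin vmax →
      IntervalIntegrable z MeasureTheory.volume a b := fun a b ha hb => by
    apply hint.mono_set
    rw [Set.uIcc_of_le hV]
    exact Set.uIcc_subset_Icc ha hb
  -- split the integral: ∫_{v'}^{vmax} = ∫_{v'}^{v} + ∫_{v}^{vmax}
  have hsplit : (∫ σ in v'..vmax, z σ) = (∫ σ in v'..v, z σ) + ∫ σ in v..vmax, z σ :=
    (intervalIntegral.integral_add_adjacent_intervals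
      (hsub v' v ⟨hv'1, hv'2⟩ ⟨hv1, hv2⟩)
      (hsub v vmax ⟨hv1, hv2⟩ ⟨hV, le_refl _⟩)).symm
  have key : (v - v') * z v' ≤ ∫ σ in v'..v, z σ := by
    rcases le_total v' v with h | h
    · have : ∫ σ in v'..v, (z v') ≤ ∫ σ in v'..v, z σ := by
        apply intervalIntegral.integral_mono_on h intervalIntegrable_const
          (hsub v' v ⟨hv'1, hv'2⟩ ⟨hv1, hv2⟩)
        intro x hx
        exact hmono ⟨hv'1, hv'2⟩ ⟨hv'1.trans hx.1, hx.2.trans hv2⟩ hx.1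
      simpa [intervalIntegral.integral_const, smul_eq_mul] using this
    · have : ∫ σ in v..v', z σ ≤ ∫ σ in v..v', (z v') := by
        apply intervalIntegral.integral_mono_on h
          (hsub v v' ⟨hv1, hv2⟩ ⟨hv'1, hv'2⟩) intervalIntegrable_const
        intro x hx
        exact hmono ⟨hv1.trans hx.1, hx.2.trans hv'2⟩ ⟨hv'1, hv'2⟩ hx.2
      rw [intervalIntegral.integral_symm v v']
      simp only [intervalIntegral.integral_const, smul_eq_mul] at this ⊢
      nlinarith
  nlinarith [hsplit, key]
end

section
/- Conversely, if z : V → [0,1] on V = {v_1 < ... < v_n} is weakly increasing and r satisfies the discrete payment identity r(v_j) = r(v_1) + z(v_1)·v_1 − z(v_j)·v_j + Σ_{x=2}^{j} z(v_x)·(v_x − v_{x−1}), then all IC constraints r(v_j) + v_j·z(v_j) ≥ r(v_{j'}) + v_j·z(v_{j'}) hold. -/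
lemma tele_sum (v : ℕ → ℝ) (a b : ℕ) (h : a ≤ b) :
    ∑ x ∈ Finset.Ioc a b, (v x - v (x - 1)) = v b - v a := by
  induction b, h using Nat.le_induction with
  | base => simp
  | succ b hb ih =>
    rw [Finset.sum_Ioc_succ_top hb, ih]
    simp

lemma key_bound (n : ℕ) (v : ℕ → ℝ) (hv : StrictMonoOn v (Set.Iio n))
    (a b : ℕ) (hbn : b < n) :
    ∀ x ∈ Finset.Ioc a b, (0:ℝ) ≤ v x - v (x - 1) := by
  intro x hx
  simp only [Finset.mem_Ioc] at hx
  have hxn : x < n := lt_of_le_of_lt hx.2 hbn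
  have h1 : x - 1 < x := Nat.sub_lt (Nat.lt_of_le_of_lt (Nat.zero_le a) hx.1) one_pos
  have := hv (Set.mem_Iio.mpr (lt_trans h1 hxn)) (Set.mem_Iio.mpr hxn) h1
  linarith

/-- Conversely, a weakly increasing allocation together with the discrete payment identity
implies all second-phase IC constraints. -/
theorem stmt4 (n : ℕ) (hn : 0 < n) (v z r : ℕ → ℝ)
    (hv : StrictMonoOn v (Set.Iio n))
    (hz : ∀ j < n, z j ∈ Set.Icc (0:ℝ) 1)
    (hzmono : ∀ j' j, j' ≤ j → j < n → z j' ≤ z j)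
    (hPI : ∀ j < n, r j = r 0 + z 0 * v 0 - z j * v j
      + ∑ x ∈ Finset.Icc 1 j, z x * (v x - v (x - 1))) :
    ∀ j < n, ∀ j' < n, r j' + v j * z j' ≤ r j + v j * z j := by
  intro j hj j' hj'
  rw [hPI j hj, hPI j' hj']
  have hIcc : ∀ m : ℕ, Finset.Icc 1 m = Finset.Ioc 0 m := by
    intro m; rw [← Finset.Icc_add_one_left_eq_Ioc]; rfl
  rw [hIcc, hIcc]
  rcases le_total j' j with h | h
  · -- j' ≤ j : show z j' * (v j - v j') ≤ ∑_{Ioc j' j} z x (v x - v (x-1))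
    rw [← Finset.sum_Ioc_consecutive _ (Nat.zero_le j') h]
    have hkey : z j' * (v j - v j') ≤ ∑ x ∈ Finset.Ioc j' j, z x * (v x - v (x - 1)) := by
      calc z j' * (v j - v j')
          = ∑ x ∈ Finset.Ioc j' j, z j' * (v x - v (x - 1)) := by
            rw [← Finset.mul_sum, tele_sum v j' j h]
        _ ≤ ∑ x ∈ Finset.Ioc j' j, z x * (v x - v (x - 1)) := by
            apply Finset.sum_le_sum
            intro x hx
            have hpos := key_bound n v hv j' j hj x hx
            simp only [Finset.mem_Ioc] at hx
            have hxn : x < n := lt_of_le_of_lt hx.2 hj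
            exact mul_le_mul_of_nonneg_right (hzmono j' x hx.1.le hxn) hpos
    linarith
  · -- j ≤ j'
    rw [← Finset.sum_Ioc_consecutive _ (Nat.zero_le j) h]
    have hkey : ∑ x ∈ Finset.Ioc j j', z x * (v x - v (x - 1)) ≤ z j' * (v j' - v j) := by
      calc ∑ x ∈ Finset.Ioc j j', z x * (v x - v (x - 1))
          ≤ ∑ x ∈ Finset.Ioc j j', z j' * (v x - v (x - 1)) := by
            apply Finset.sum_le_sum
            intro x hx
            have hpos := key_bound n v hv j j' hj' x hx
            simp only [Finset.mem_Ioc] at hx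
            exact mul_le_mul_of_nonneg_right (hzmono x j' hx.2 hj') hpos
        _ = z j' * (v j' - v j) := by rw [← Finset.mul_sum, tele_sum v j j' h]
    linarith
end

section
/- Let T = {t_1 < ... < t_m}, Q : T × T → ℝ with Q(t,t_x) − Q(t,t_{x−1}) weakly increasing in t for each x, and p defined by p(t_i) = p(t_1) + Σ_{y=2}^{i} (Q(t_y,t_y) − Q(t_y,t_{y−1})). Then for all i < i': p(t_{i'}) − p(t_i) ≥ Q(t_i, t_{i'}) − Q(t_i, t_i), i.e., the upward IC constraints hold as well. -/
lemma telescope_Ioc (g : ℕ → ℝ) : ∀ a b : ℕ, a ≤ b →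
    ∑ y ∈ Finset.Ioc a b, (g y - g (y - 1)) = g b - g a := by
  intro a b hab
  induction b, hab using Nat.le_induction with
  | base => simp
  | succ b hab ih =>
      rw [Finset.sum_Ioc_succ_top hab, ih]
      simp

/-- Upward IC constraints hold for prices defined from consecutive constraints, given
that `Q` has increasing differences. -/
theorem stmt7 (m : ℕ) (Q : ℕ → ℕ → ℝ) (p : ℕ → ℝ)
    (hID : ∀ x, 0 < x → x < m → ∀ i i', i ≤ i' → i' < m →
      Q i x - Q i (x - 1) ≤ Q i' x - Q i' (x - 1))
    (hp : ∀ i < m, p i = p 0 + ∑ y ∈ Finset.Icc 1 i, (Q y y - Q y (y - 1))) :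
    ∀ i i', i < i' → i' < m → Q i i' - Q i i ≤ p i' - p i := by
  intro i i' hii hi'm
  have him : i < m := lt_trans hii hi'm
  have hpd : p i' - p i = ∑ y ∈ Finset.Ioc i i', (Q y y - Q y (y - 1)) := by
    rw [hp i him, hp i' hi'm, (by simpa using Finset.Icc_add_one_left_eq_Ioc 0 i' : Finset.Icc 1 i' = Finset.Ioc 0 i'),
      (by simpa using Finset.Icc_add_one_left_eq_Ioc 0 i : Finset.Icc 1 i = Finset.Ioc 0 i),
      ← Finset.sum_Ioc_consecutive _ (Nat.zero_le i) (le_of_lt hii)]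
    ring
  rw [hpd, ← telescope_Ioc (Q i) i i' (le_of_lt hii)]
  apply Finset.sum_le_sum
  intro y hy
  simp only [Finset.mem_Ioc] at hy
  exact hID y (by omega) (by omega) i y (by omega) (by omega)
end

section
/- Let T = {t_1 < ... < t_m} and Q(t,t') = E_{v∼G_t}[max(v, R(t'))] where R : T → ℝ is weakly decreasing and each G_t has finite support contained in V = {v_1 < ... < v_n}. If the value distributions satisfy FOSD ordering (G_{t}(v) ≤ G_{t'}(v) for t ≥ t'), then the function Q satisfies cyclic monotonicity on pairs: Q(t,t) + Q(t',t') ≥ Q(t,t') + Q(t',t) for all t, t' ∈ T. -/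
lemma max_sub_max_anti {a b x x' : ℝ} (hba : b ≤ a) (hxx : x ≤ x') :
    max x' a - max x' b ≤ max x a - max x b := by
  rcases le_total x' b with h | h
  · rw [max_eq_right h, max_eq_right (h.trans hba), max_eq_right (hxx.trans h),
      max_eq_right ((hxx.trans h).trans hba)]
  · rcases le_total x' a with h2 | h2
    · have hxa : max x a = a := max_eq_right (hxx.trans h2)
      have hxb : max x b ≤ x' := max_le hxx h
      have h1 : max x' a = a := max_eq_right h2
      have h3 : max x' b = x' := max_eq_left h
      linarith
    · have h1 : max x' a = x' := max_eq_left h2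
      have h3 : max x' b = x' := max_eq_left (hba.trans h2)
      have h4 : max x b ≤ max x a := max_le_max le_rfl hba
      linarith

lemma abel_le (n : ℕ) (f d : ℕ → ℝ)
    (hd : ∀ j, j + 1 < n → d (j + 1) ≤ d j)
    (hS : ∀ j < n, ∑ y ∈ Finset.range (j + 1), f y ≤ 0)
    (hT : ∑ y ∈ Finset.range n, f y = 0) :
    ∑ y ∈ Finset.range n, d y * f y ≤ 0 := by
  have hbp := Finset.sum_range_by_parts (f := d) (g := f) (n := n)
  simp only [smul_eq_mul] at hbp
  rw [hbp, hT, mul_zero, zero_sub, neg_nonpos]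
  apply Finset.sum_nonneg
  intro j hj
  rw [Finset.mem_range] at hj
  have hj1 : j + 1 < n := by omega
  have h1 : d (j + 1) - d j ≤ 0 := by linarith [hd j hj1]
  have h2 : ∑ y ∈ Finset.range (j + 1), f y ≤ 0 := hS j (by omega)
  exact mul_nonneg_of_nonpos_of_nonpos h1 h2

lemma key (m n : ℕ) (v : ℕ → ℝ) (g : ℕ → ℕ → ℝ) (R : ℕ → ℝ)
    (hv : StrictMonoOn v (Set.Iio n))
    (hg1 : ∀ i < m, ∑ j ∈ Finset.range n, g i j = 1)
    (hR : ∀ i i', i ≤ i' → i' < m → R i' ≤ R i)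
    (hfosd : ∀ i i', i ≤ i' → i' < m → ∀ j < n,
      ∑ y ∈ Finset.range (j + 1), g i' y ≤ ∑ y ∈ Finset.range (j + 1), g i y)
    (i : ℕ) (hi : i < m) (i' : ℕ) (hi' : i' < m) (hii : i ≤ i') :
    (∑ y ∈ Finset.range n, g i y * max (v y) (R i')) +
      (∑ y ∈ Finset.range n, g i' y * max (v y) (R i)) ≤
    (∑ y ∈ Finset.range n, g i y * max (v y) (R i)) +
      (∑ y ∈ Finset.range n, g i' y * max (v y) (R i')) := by
  have hRR : R i' ≤ R i := hR i i' hii hi'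
  set d : ℕ → ℝ := fun y => max (v y) (R i) - max (v y) (R i') with hd_def
  set f : ℕ → ℝ := fun y => g i' y - g i y with hf_def
  have habel : ∑ y ∈ Finset.range n, d y * f y ≤ 0 := by
    apply abel_le
    · intro j hj
      have hvv : v j ≤ v (j + 1) :=
        le_of_lt (hv (by simpa using (by omega : j < n)) (by simpa using hj) (by omega))
      exact max_sub_max_anti hRR hvv
    · intro j hj
      have := hfosd i i' hii hi' j hj
      simp only [hf_def, Finset.sum_sub_distrib]
      linarith
    · simp only [hf_def, Finset.sum_sub_distrib, hg1 i hi, hg1 i' hi']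
      ring
  have hexp : ∑ y ∈ Finset.range n, d y * f y =
      ((∑ y ∈ Finset.range n, g i' y * max (v y) (R i)) +
        (∑ y ∈ Finset.range n, g i y * max (v y) (R i'))) -
      ((∑ y ∈ Finset.range n, g i y * max (v y) (R i)) +
        (∑ y ∈ Finset.range n, g i' y * max (v y) (R i'))) := by
    rw [← Finset.sum_add_distrib, ← Finset.sum_add_distrib, ← Finset.sum_sub_distrib]
    apply Finset.sum_congr rfl
    intro y _
    simp only [hd_def, hf_def]
    ring
  rw [hexp] at habel
  linarith

/-- Two-cycle monotonicity of `Q(t,t') = E_{v∼G_t}[max(v, R(t'))]` in the discrete setting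
with a weakly decreasing refund and FOSD-ordered value distributions. -/
theorem stmt12 (m n : ℕ) (v : ℕ → ℝ) (g : ℕ → ℕ → ℝ) (R : ℕ → ℝ)
    (hv : StrictMonoOn v (Set.Iio n))
    (hg0 : ∀ i < m, ∀ j < n, 0 ≤ g i j)
    (hg1 : ∀ i < m, ∑ j ∈ Finset.range n, g i j = 1)
    (hR : ∀ i i', i ≤ i' → i' < m → R i' ≤ R i)
    (hfosd : ∀ i i', i ≤ i' → i' < m → ∀ j < n,
      ∑ y ∈ Finset.range (j + 1), g i' y ≤ ∑ y ∈ Finset.range (j + 1), g i y) :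
    ∀ i < m, ∀ i' < m,
      (∑ y ∈ Finset.range n, g i y * max (v y) (R i')) +
        (∑ y ∈ Finset.range n, g i' y * max (v y) (R i)) ≤
      (∑ y ∈ Finset.range n, g i y * max (v y) (R i)) +
        (∑ y ∈ Finset.range n, g i' y * max (v y) (R i')) := by
  intro i hi i' hi'
  rcases le_total i i' with h | h
  · exact key m n v g R hv hg1 hR hfosd i hi i' hi' h
  · have := key m n v g R hv hg1 hR hfosd i' hi' i hi h
    linarith
end
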